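/- Let (V, E) be a finite simple graph, let 𝒢 be the family of subsets S of V ⊎ E such that every edge in S ∩ E has at least one endpoint in S, and let w(v) = 1 − deg(v) for v ∈ V and w(e) = 1 for e ∈ E, extended additively to sets. Then for every S ∈ 𝒢 there exists an independent set U ⊆ V with |U| ≥ w(S). -/

import Mathlib

/-- `S` is feasible: every edge in `S` has at least one of its endpoints in `S`.
The ground set is the disjoint union `V ⊕ E` of vertices and edges. -/
def GraphFeasible {V : Type*} [Fintype V] [DecidableEq V] (G : SimpleGraph V)
    (S : Finset (V ⊕ G.edgeSet)) : Prop :=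
  ∀ e : G.edgeSet, Sum.inr e ∈ S → ∃ v ∈ (e : Sym2 V), Sum.inl v ∈ S

/-- The weight function: `w(v) = 1 - deg v` on vertices, `w(e) = 1` on edges. -/
def graphWeight {V : Type*} [Fintype V] [DecidableEq V] (G : SimpleGraph V)
    [DecidableRel G.Adj] : V ⊕ G.edgeSet → ℤ
  | Sum.inl v => 1 - G.degree v
  | Sum.inr _ => 1

/-- `U` is an independent set of vertices. -/
def IndepSet {V : Type*} (G : SimpleGraph V) (U : Finset V) : Prop :=
  ∀ u ∈ U, ∀ v ∈ U, ¬ G.Adj u v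

section Aux

set_option linter.unusedSectionVars false

variable {V : Type*} [Fintype V] [DecidableEq V] (G : SimpleGraph V) [DecidableRel G.Adj]

/-- Edges of `G` with both endpoints in `A`. -/
noncomputable def insideEdges (A : Finset V) : Finset G.edgeSet :=
  Finset.univ.filter (fun e : G.edgeSet => ∀ v, v ∈ (e : Sym2 V) → v ∈ A)

/-- A chosen endpoint of an edge, lying in `A` whenever possible. -/
noncomputable def chEnd (A : Finset V) (e : G.edgeSet) : V :=
  if h : ∃ v, v ∈ (e : Sym2 V) ∧ v ∈ A then h.choose else (Quot.out (e : Sym2 V)).1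

lemma chEnd_mem (A : Finset V) (e : G.edgeSet) : chEnd G A e ∈ (e : Sym2 V) := by
  unfold chEnd
  split
  · next h => exact h.choose_spec.1
  · exact Sym2.out_fst_mem _

lemma chEnd_mem_A (A : Finset V) (e : G.edgeSet)
    (h : ∃ v, v ∈ (e : Sym2 V) ∧ v ∈ A) : chEnd G A e ∈ A := by
  unfold chEnd
  rw [dif_pos h]
  exact h.choose_spec.2

/-- The other endpoint. -/
noncomputable def othEnd (A : Finset V) (e : G.edgeSet) : V :=
  Sym2.Mem.other (chEnd_mem G A e)

lemma othEnd_mem (A : Finset V) (e : G.edgeSet) : othEnd G A e ∈ (e : Sym2 V) :=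
  Sym2.other_mem _

lemma othEnd_ne (A : Finset V) (e : G.edgeSet) : othEnd G A e ≠ chEnd G A e :=
  Sym2.other_ne (G.not_isDiag_of_mem_edgeSet e.2) _

lemma degree_eq_card_filter (v : V) :
    (Finset.univ.filter (fun e : G.edgeSet => v ∈ (e : Sym2 V))).card = G.degree v := by
  rw [← SimpleGraph.card_incidenceFinset_eq_degree]
  refine Finset.card_bij (fun e _ => (e : Sym2 V)) ?_ ?_ ?_
  · intro e he
    simp only [Finset.mem_filter] at he
    rw [SimpleGraph.mem_incidenceFinset]
    exact ⟨e.2, he.2⟩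
  · intro a ha b hb h; exact Subtype.ext h
  · intro e he
    rw [SimpleGraph.mem_incidenceFinset] at he
    exact ⟨⟨e, he.1⟩, by simpa using he.2, rfl⟩

/-- Double counting: edges with an endpoint in `A`, plus edges fully inside `A`,
are at most the total degree of `A`. -/
lemma count_le (A : Finset V) (F : Finset G.edgeSet)
    (hF : ∀ e ∈ F, ∃ v, v ∈ (e : Sym2 V) ∧ v ∈ A) :
    F.card + (insideEdges G A).card ≤ ∑ v ∈ A, G.degree v := by
  classical
  set P : Finset (V × G.edgeSet) :=
    (A ×ˢ (Finset.univ : Finset G.edgeSet)).filter (fun p => p.1 ∈ (p.2 : Sym2 V)) with hP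
  have hPcard : P.card = ∑ v ∈ A, G.degree v := by
    rw [hP, Finset.card_filter, Finset.sum_product]
    refine Finset.sum_congr rfl fun v _ => ?_
    rw [← degree_eq_card_filter G v, Finset.card_filter]
  rw [← hPcard, ← Finset.card_disjSum]
  refine Finset.card_le_card_of_injOn
    (Sum.elim (fun e => (chEnd G A e, e)) (fun e => (othEnd G A e, e))) ?_ ?_
  · rintro (e | e) ha
    · rw [Finset.mem_coe, Finset.mem_disjSum] at ha
      obtain ⟨_, hmem, h⟩ | ⟨_, _, h⟩ := ha
      · cases Sum.inl.inj h
        simp only [Sum.elim_inl, hP, Finset.mem_coe, Finset.mem_filter, Finset.mem_product,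
          Finset.mem_univ, and_true]
        exact ⟨chEnd_mem_A G A e (hF e hmem), chEnd_mem G A e⟩
      · exact absurd h (by simp)
    · rw [Finset.mem_coe, Finset.mem_disjSum] at ha
      obtain ⟨_, _, h⟩ | ⟨_, hmem, h⟩ := ha
      · exact absurd h (by simp)
      · cases Sum.inr.inj h
        simp only [Sum.elim_inr, hP, Finset.mem_coe, Finset.mem_filter, Finset.mem_product,
          Finset.mem_univ, and_true]
        have hmA : ∀ w, w ∈ (e : Sym2 V) → w ∈ A := by
          have := hmem
          simpa [insideEdges] using this
        exact ⟨hmA _ (othEnd_mem G A e), othEnd_mem G A e⟩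
  · rintro (e | e) _ (e' | e') _ heq <;> simp only [Sum.elim_inl, Sum.elim_inr,
      Prod.mk.injEq] at heq
    · rw [heq.2]
    · cases heq.2; exact absurd heq.1.symm (othEnd_ne G A e)
    · cases heq.2; exact absurd heq.1 (othEnd_ne G A e)
    · rw [heq.2]

/-- From any vertex set one can extract an independent subset, losing at most
one vertex for each edge inside the set. -/
lemma indep_from_erase (A : Finset V) :
    ∃ U : Finset V, U ⊆ A ∧ IndepSet G U ∧
      (A.card : ℤ) - (insideEdges G A).card ≤ U.card := by
  induction A using Finset.strongInduction with
  | _ A ih =>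
    by_cases hA : IndepSet G A
    · exact ⟨A, le_refl _, hA, by
        have : (0:ℤ) ≤ ((insideEdges G A).card : ℤ) := Int.natCast_nonneg _
        omega⟩
    · simp only [IndepSet, not_forall] at hA
      obtain ⟨u, hu, v, hv, hadj⟩ := hA
      rw [not_not] at hadj
      have hne : u ≠ v := G.ne_of_adj hadj
      have hss : A.erase u ⊂ A := Finset.erase_ssubset hu
      obtain ⟨U, hUsub, hUind, hUcard⟩ := ih (A.erase u) hss
      refine ⟨U, hUsub.trans (Finset.erase_subset _ _), hUind, ?_⟩
      have hedge : (⟨s(u,v), hadj⟩ : G.edgeSet) ∈ insideEdges G A := by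
        simp only [insideEdges, Finset.mem_filter, Finset.mem_univ, true_and]
        intro w hw
        rw [Sym2.mem_iff] at hw
        rcases hw with rfl | rfl <;> assumption
      have hnedge : (⟨s(u,v), hadj⟩ : G.edgeSet) ∉ insideEdges G (A.erase u) := by
        simp only [insideEdges, Finset.mem_filter, Finset.mem_univ, true_and, not_forall]
        exact ⟨u, by simp, by simp⟩
      have hsub2 : insideEdges G (A.erase u) ⊆ insideEdges G A := by
        intro e he
        simp only [insideEdges, Finset.mem_filter, Finset.mem_univ, true_and] at he ⊢
        exact fun w hw => Finset.mem_of_mem_erase (he w hw)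
      have hlt : (insideEdges G (A.erase u)).card < (insideEdges G A).card :=
        Finset.card_lt_card (Finset.ssubset_iff_of_subset hsub2 |>.mpr ⟨_, hedge, hnedge⟩)
      have hcA : (A.erase u).card + 1 = A.card := Finset.card_erase_add_one hu
      omega

end Aux

/-- **Feasible sets are dominated by independent sets.** For every feasible set `S`
there is an independent set `U` with `|U| ≥ w(S)`. -/
theorem feasible_set_dominated_by_indep_set
    {V : Type*} [Fintype V] [DecidableEq V] (G : SimpleGraph V) [DecidableRel G.Adj]
    (S : Finset (V ⊕ G.edgeSet)) (hS : GraphFeasible G S) :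
    ∃ U : Finset V, IndepSet G U ∧ ∑ x ∈ S, graphWeight G x ≤ (U.card : ℤ) := by
  classical
  set A := S.toLeft with hA
  set F := S.toRight with hFdef
  obtain ⟨U, hUA, hUind, hUcard⟩ := indep_from_erase G A
  refine ⟨U, hUind, ?_⟩
  have hF : ∀ e ∈ F, ∃ v, v ∈ (e : Sym2 V) ∧ v ∈ A := by
    intro e he
    obtain ⟨v, hv1, hv2⟩ := hS e (Finset.mem_toRight.mp he)
    exact ⟨v, hv1, Finset.mem_toLeft.mpr hv2⟩
  have hcount := count_le G A F hF
  have hsum : ∑ x ∈ S, graphWeight G x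
      = (A.card : ℤ) - ∑ v ∈ A, (G.degree v : ℤ) + F.card := by
    conv_lhs => rw [← Finset.toLeft_disjSum_toRight (u := S)]
    rw [Finset.sum_disjSum]
    have h1 : ∑ v ∈ A, graphWeight G (Sum.inl v)
        = (A.card : ℤ) - ∑ v ∈ A, (G.degree v : ℤ) := by
      simp [graphWeight, Finset.sum_sub_distrib]
    have h2 : ∑ e ∈ F, graphWeight G (Sum.inr e) = (F.card : ℤ) := by
      simp [graphWeight]
    rw [h1, h2]
  have hcount' : (F.card : ℤ) + ((insideEdges G A).card : ℤ)
      ≤ ∑ v ∈ A, (G.degree v : ℤ) := by exact_mod_cast hcount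
  linarith
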